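/- arXiv:1911.12402 — 5 statements merged into one kernel-verified Lean document; each statement's English description precedes it below -/
import Mathlib

section
/- Let ν be a Borel probability measure on [0,1] and let (X_i)_{i≥1} be i.i.d. random variables with law ν; write X̄_m = (X₁+⋯+X_m)/m. If for some m₁ ∈ ℕ, m₁ ≥ 1, one has E[X̄_{m₁}/(1−X̄_{m₁})] < 1, then for every m₂ ≥ m₁ one also has E[X̄_{m₂}/(1−X̄_{m₂})] < 1. (In terms of the condensation criterion, if the Bianconi–Barabási model BB(m₁) with fitness law ν^{(m₁)} condensates, then BB(m₂) condensates.) -/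
open MeasureTheory ProbabilityTheory Filter
open scoped ENNReal
open Finset

section AuxLemmas

open Finset

lemma count_mem_powersetCard {s : Finset ℕ} {i : ℕ} (hi : i ∈ s) (m : ℕ) (hm : 1 ≤ m) :
    ((s.powersetCard m).filter (fun S => i ∈ S)).card
      = (s.card - 1).choose (m - 1) := by
  rw [← Finset.card_erase_of_mem hi, ← Finset.card_powersetCard (m-1) (s.erase i)]
  apply Finset.card_bij (fun S _ => S.erase i)
  · rintro S hS
    simp only [mem_filter, mem_powersetCard] at hS
    rw [mem_powersetCard]
    exact ⟨erase_subset_erase _ hS.1.1, by rw [card_erase_of_mem hS.2, hS.1.2]⟩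
  · rintro S hS T hT h
    simp only [mem_filter] at hS hT
    rw [← insert_erase hS.2, ← insert_erase hT.2, h]
  · rintro T hT
    rw [mem_powersetCard] at hT
    have hiT : i ∉ T := fun h => (mem_erase.1 (hT.1 h)).1 rfl
    refine ⟨insert i T, ?_, ?_⟩
    · simp only [mem_filter, mem_powersetCard]
      refine ⟨⟨?_, ?_⟩, mem_insert_self _ _⟩
      · exact insert_subset hi (hT.1.trans (erase_subset _ _))
      · rw [card_insert_of_notMem hiT, hT.2]; omega
    · rw [erase_insert hiT]
open Finset

lemma sum_powersetCard_sum (x : ℕ → ℝ) (s : Finset ℕ) (m : ℕ) (hm : 1 ≤ m)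
    (hcount : ∀ i ∈ s, ((s.powersetCard m).filter (fun S => i ∈ S)).card
      = (s.card - 1).choose (m - 1)) :
    ∑ S ∈ s.powersetCard m, ∑ i ∈ S, x i
      = ((s.card - 1).choose (m-1) : ℝ) * ∑ i ∈ s, x i := by
  calc ∑ S ∈ s.powersetCard m, ∑ i ∈ S, x i
      = ∑ S ∈ s.powersetCard m, ∑ i ∈ s, if i ∈ S then x i else 0 := by
        refine Finset.sum_congr rfl fun S hS => ?_
        rw [mem_powersetCard] at hS
        rw [← Finset.sum_filter, Finset.filter_mem_eq_inter, Finset.inter_comm,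
          Finset.inter_eq_left.2 hS.1]
    _ = ∑ i ∈ s, ∑ S ∈ s.powersetCard m, if i ∈ S then x i else 0 := Finset.sum_comm
    _ = ∑ i ∈ s, ((s.powersetCard m).filter (fun S => i ∈ S)).card • x i := by
        refine Finset.sum_congr rfl fun i _ => ?_
        rw [← Finset.sum_filter, Finset.sum_const]
    _ = ((s.card - 1).choose (m-1) : ℝ) * ∑ i ∈ s, x i := by
        rw [Finset.mul_sum]
        refine Finset.sum_congr rfl fun i hi => ?_
        rw [hcount i hi, nsmul_eq_mul]
open Finset

lemma ratio_avg_le {α : Type*} (s : Finset α) (hs : s.Nonempty) (y : α → ℝ)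
    (h0 : ∀ a ∈ s, 0 ≤ y a) (h1 : ∀ a ∈ s, y a < 1) :
    ((∑ a ∈ s, y a) / s.card) / (1 - (∑ a ∈ s, y a) / s.card)
      ≤ (∑ a ∈ s, y a / (1 - y a)) / s.card := by
  set C : ℝ := (s.card : ℝ) with hC
  have hCpos : 0 < C := by
    simp only [hC, Nat.cast_pos, Finset.card_pos]; exact hs
  set b : α → ℝ := fun a => 1 - y a with hb
  have hbpos : ∀ a ∈ s, 0 < b a := fun a ha => by
    simp only [hb]; linarith [h1 a ha]
  set B : ℝ := ∑ a ∈ s, b a with hB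
  have hBpos : 0 < B := Finset.sum_pos hbpos hs
  have hYB : ∑ a ∈ s, y a = C - B := by
    simp only [hB, hb, Finset.sum_sub_distrib, Finset.sum_const, nsmul_eq_mul, mul_one, hC]
    ring
  have hR : ∑ a ∈ s, y a / (1 - y a) = (∑ a ∈ s, (b a)⁻¹) - C := by
    calc ∑ a ∈ s, y a / (1 - y a) = ∑ a ∈ s, ((b a)⁻¹ - 1) := by
          refine Finset.sum_congr rfl fun a ha => ?_
          have hne : (1 : ℝ) - y a ≠ 0 := (hbpos a ha).ne'
          show y a / (1 - y a) = (1 - y a)⁻¹ - 1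
          rw [inv_eq_one_div, div_sub_one hne]; ring
      _ = (∑ a ∈ s, (b a)⁻¹) - C := by
          rw [Finset.sum_sub_distrib, Finset.sum_const, nsmul_eq_mul, mul_one]
  have key : C ^ 2 ≤ B * ∑ a ∈ s, (b a)⁻¹ := by
    have cs := Finset.sum_mul_sq_le_sq_mul_sq s (fun a => Real.sqrt (b a))
      (fun a => (Real.sqrt (b a))⁻¹)
    have h1' : ∑ a ∈ s, Real.sqrt (b a) * (Real.sqrt (b a))⁻¹ = C := by
      rw [Finset.sum_congr rfl (fun a ha =>
        mul_inv_cancel₀ (Real.sqrt_ne_zero'.2 (hbpos a ha)))]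
      simp [hC]
    have h2' : ∑ a ∈ s, Real.sqrt (b a) ^ 2 = B := by
      rw [hB]; exact Finset.sum_congr rfl fun a ha => Real.sq_sqrt (hbpos a ha).le
    have h3' : ∑ a ∈ s, ((Real.sqrt (b a))⁻¹) ^ 2 = ∑ a ∈ s, (b a)⁻¹ := by
      refine Finset.sum_congr rfl fun a ha => ?_
      rw [inv_pow, Real.sq_sqrt (hbpos a ha).le]
    rw [h1', h2', h3'] at cs
    exact cs
  rw [hYB, hR]
  have hden : 1 - (C - B) / C = B / C := by field_simp; ring
  rw [hden]
  have hLHS : (C - B) / C / (B / C) = (C - B) / B := by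
    field_simp
  rw [hLHS, div_le_div_iff₀ hBpos hCpos]
  nlinarith [key]


lemma pointwise_bound (m₁ m₂ : ℕ) (hm₁ : 1 ≤ m₁) (h12 : m₁ ≤ m₂) (x : ℕ → ℝ)
    (hx : ∀ i ∈ Finset.range m₂, x i ∈ Set.Icc (0:ℝ) 1) :
    ENNReal.ofReal ((∑ i ∈ Finset.range m₂, x i) / m₂)
        / ENNReal.ofReal (1 - (∑ i ∈ Finset.range m₂, x i) / m₂)
      ≤ (∑ S ∈ (Finset.range m₂).powersetCard m₁,
          ENNReal.ofReal ((∑ i ∈ S, x i) / m₁)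
            / ENNReal.ofReal (1 - (∑ i ∈ S, x i) / m₁))
        / (((Finset.range m₂).powersetCard m₁).card : ℝ≥0∞) := by
  have hm₂ : 1 ≤ m₂ := hm₁.trans h12
  set P := (Finset.range m₂).powersetCard m₁ with hP
  have hPne : P.Nonempty := Finset.powersetCard_nonempty.2 (by simpa using h12)
  have hCpos : 0 < (P.card : ℝ) := by
    simp only [Nat.cast_pos, Finset.card_pos]; exact hPne
  set y : Finset ℕ → ℝ := fun S => (∑ i ∈ S, x i) / m₁ with hy
  have hy0 : ∀ S ∈ P, 0 ≤ y S := by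
    intro S hS
    rw [Finset.mem_powersetCard] at hS
    have : 0 ≤ ∑ i ∈ S, x i :=
      Finset.sum_nonneg fun i hi => (hx i (hS.1 hi)).1
    positivity
  have hy1 : ∀ S ∈ P, y S ≤ 1 := by
    intro S hS
    rw [Finset.mem_powersetCard] at hS
    have hsum : ∑ i ∈ S, x i ≤ m₁ := by
      calc ∑ i ∈ S, x i ≤ ∑ i ∈ S, 1 :=
            Finset.sum_le_sum fun i hi => (hx i (hS.1 hi)).2
        _ = m₁ := by rw [Finset.sum_const, hS.2]; simp
    rw [hy, div_le_one (by exact_mod_cast hm₁)]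
    exact hsum
  -- the combinatorial identity
  have hnat : m₂ * (m₂-1).choose (m₁-1) = m₂.choose m₁ * m₁ := by
    have h := Nat.add_one_mul_choose_eq (m₂-1) (m₁-1)
    have e1 : m₂ - 1 + 1 = m₂ := by omega
    have e2 : m₁ - 1 + 1 = m₁ := by omega
    rwa [e1, e2] at h
  have hcard : P.card = m₂.choose m₁ := by
    rw [hP, Finset.card_powersetCard, Finset.card_range]
  have hsum : ∑ S ∈ P, y S = (P.card : ℝ) * ((∑ i ∈ Finset.range m₂, x i) / m₂) := by
    have hc := sum_powersetCard_sum x (Finset.range m₂) m₁ hm₁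
      (fun i hi => by
        rw [count_mem_powersetCard hi m₁ hm₁])
    rw [Finset.card_range] at hc
    rw [hy]
    simp only
    rw [← Finset.sum_div, hc, hcard]
    have hreal : ((m₂:ℝ)) * ((m₂-1).choose (m₁-1) : ℝ) = (m₂.choose m₁ : ℝ) * m₁ := by
      exact_mod_cast hnat
    have hm₁R : (m₁:ℝ) ≠ 0 := by positivity
    have hm₂R : (m₂:ℝ) ≠ 0 := by positivity
    field_simp
    linear_combination (∑ i ∈ Finset.range m₂, x i) * hreal
  by_cases hone : ∃ S ∈ P, y S = 1
  · -- RHS is infinite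
    obtain ⟨S, hSP, hS1⟩ := hone
    have hterm : ENNReal.ofReal ((∑ i ∈ S, x i) / m₁)
        / ENNReal.ofReal (1 - (∑ i ∈ S, x i) / m₁) = ⊤ := by
      have h1 : ((∑ i ∈ S, x i) / m₁ : ℝ) = 1 := hS1
      rw [h1]
      simp
    have hsum_top : (∑ S ∈ P, ENNReal.ofReal ((∑ i ∈ S, x i) / m₁)
        / ENNReal.ofReal (1 - (∑ i ∈ S, x i) / m₁)) = ⊤ :=
      ENNReal.sum_eq_top.2 ⟨S, hSP, hterm⟩
    rw [hsum_top, ENNReal.top_div_of_ne_top (by simp)]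
    exact le_top
  · push_neg at hone
    have hylt : ∀ S ∈ P, y S < 1 := fun S hS => lt_of_le_of_ne (hy1 S hS) (hone S hS)
    have hsumlt : ∑ S ∈ P, y S < (P.card : ℝ) := by
      calc ∑ S ∈ P, y S < ∑ S ∈ P, 1 := Finset.sum_lt_sum_of_nonempty hPne hylt
        _ = (P.card : ℝ) := by rw [Finset.sum_const]; simp
    set xb : ℝ := (∑ i ∈ Finset.range m₂, x i) / m₂ with hxb
    have hxbeq : xb = (∑ S ∈ P, y S) / P.card := by
      rw [hsum, mul_div_assoc, mul_comm]
      field_simp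
    have hxblt : xb < 1 := by
      rw [hxbeq, div_lt_one hCpos]; exact hsumlt
    have hxb0 : 0 ≤ xb := by
      rw [hxbeq]
      exact div_nonneg (Finset.sum_nonneg hy0) hCpos.le
    have hden : (0:ℝ) < 1 - xb := by linarith
    have key := ratio_avg_le P hPne y hy0 hylt
    rw [← hxbeq] at key
    calc ENNReal.ofReal xb / ENNReal.ofReal (1 - xb)
        = ENNReal.ofReal (xb / (1 - xb)) := (ENNReal.ofReal_div_of_pos hden).symm
      _ ≤ ENNReal.ofReal ((∑ S ∈ P, y S / (1 - y S)) / P.card) :=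
          ENNReal.ofReal_le_ofReal key
      _ = ENNReal.ofReal (∑ S ∈ P, y S / (1 - y S)) / ENNReal.ofReal (P.card : ℝ) :=
          ENNReal.ofReal_div_of_pos hCpos
      _ = (∑ S ∈ P, ENNReal.ofReal (y S / (1 - y S))) / (P.card : ℝ≥0∞) := by
          rw [ENNReal.ofReal_sum_of_nonneg
            (fun S hS => div_nonneg (hy0 S hS) (by linarith [hylt S hS])),
            ENNReal.ofReal_natCast]
      _ = (∑ S ∈ P, ENNReal.ofReal ((∑ i ∈ S, x i) / m₁)
            / ENNReal.ofReal (1 - (∑ i ∈ S, x i) / m₁)) / (P.card : ℝ≥0∞) := by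
          congr 1
          refine Finset.sum_congr rfl fun S hS => ?_
          have hdS : (0:ℝ) < 1 - y S := by linarith [hylt S hS]
          rw [← ENNReal.ofReal_div_of_pos hdS]


lemma law_sum_card {Ω : Type*} [MeasurableSpace Ω] (μ : Measure Ω) [IsProbabilityMeasure μ]
    (ν : Measure ℝ) [IsProbabilityMeasure ν]
    (X : ℕ → Ω → ℝ) (hmeas : ∀ i, Measurable (X i))
    (hindep : iIndepFun X μ)
    (hlaw : ∀ i, μ.map (X i) = ν) :
    ∀ (n : ℕ) (S : Finset ℕ), S.card = n →
      μ.map (fun ω => ∑ i ∈ S, X i ω) = μ.map (fun ω => ∑ i ∈ Finset.range n, X i ω) := by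
  have Msum : ∀ S : Finset ℕ, Measurable (fun ω => ∑ i ∈ S, X i ω) :=
    fun S => Finset.measurable_sum S (fun i _ => hmeas i)
  intro n
  induction n with
  | zero => intro S hS
            rw [Finset.card_eq_zero] at hS
            simp [hS]
  | succ n ih =>
    intro S hS
    obtain ⟨a, ha⟩ : S.Nonempty := Finset.card_pos.1 (by omega)
    have haS : a ∉ S.erase a := Finset.notMem_erase a S
    have hcard : (S.erase a).card = n := by
      rw [Finset.card_erase_of_mem ha, hS]; omega
    have hIndS : IndepFun (fun ω => ∑ i ∈ S.erase a, X i ω) (X a) μ := by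
      have h := hindep.indepFun_finsetSum_of_notMem hmeas haS
      have hfun : (∑ j ∈ S.erase a, X j) = fun ω => ∑ i ∈ S.erase a, X i ω :=
        funext fun ω => Finset.sum_apply ω (S.erase a) X
      rwa [hfun] at h
    have hIndR : IndepFun (fun ω => ∑ i ∈ Finset.range n, X i ω) (X n) μ := by
      have h := hindep.indepFun_sum_range_succ hmeas n
      have hfun : (∑ j ∈ Finset.range n, X j) = fun ω => ∑ i ∈ Finset.range n, X i ω :=
        funext fun ω => Finset.sum_apply ω (Finset.range n) X
      rwa [hfun] at h
    have hmapS : μ.map (fun ω => ((∑ i ∈ S.erase a, X i ω), X a ω))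
        = (μ.map (fun ω => ∑ i ∈ Finset.range n, X i ω)).prod ν := by
      rw [(indepFun_iff_map_prod_eq_prod_map_map (Msum _).aemeasurable
        (hmeas a).aemeasurable).1 hIndS, ih _ hcard, hlaw a]
    have hmapR : μ.map (fun ω => ((∑ i ∈ Finset.range n, X i ω), X n ω))
        = (μ.map (fun ω => ∑ i ∈ Finset.range n, X i ω)).prod ν := by
      rw [(indepFun_iff_map_prod_eq_prod_map_map (Msum _).aemeasurable
        (hmeas n).aemeasurable).1 hIndR, hlaw n]
    have e1 : (fun ω => ∑ i ∈ S, X i ω)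
        = (fun p : ℝ × ℝ => p.1 + p.2) ∘ (fun ω => ((∑ i ∈ S.erase a, X i ω), X a ω)) := by
      funext ω
      simp only [Function.comp_apply]
      rw [← Finset.add_sum_erase _ _ ha, add_comm]
    have e2 : (fun ω => ∑ i ∈ Finset.range (n+1), X i ω)
        = (fun p : ℝ × ℝ => p.1 + p.2) ∘ (fun ω => ((∑ i ∈ Finset.range n, X i ω), X n ω)) := by
      funext ω
      simp only [Function.comp_apply, Finset.sum_range_succ]
    rw [e1, e2, ← Measure.map_map measurable_add ((Msum _).prodMk (hmeas a)),
      ← Measure.map_map measurable_add ((Msum _).prodMk (hmeas n)), hmapS, hmapR]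


end AuxLemmas

/-- The "condensation integral" `E[X̄_m / (1 - X̄_m)]`, computed in `[0,∞]`
(with the convention `x/(1-x) = ∞` when `x = 1`, realised via `ℝ≥0∞` division),
where `X̄_m = (X₁ + ⋯ + X_m)/m`. -/
noncomputable def meanRatioInt {Ω : Type*} [MeasurableSpace Ω] (μ : Measure Ω)
    (X : ℕ → Ω → ℝ) (m : ℕ) : ℝ≥0∞ :=
  ∫⁻ ω, ENNReal.ofReal ((∑ i ∈ Finset.range m, X i ω) / m) /
    ENNReal.ofReal (1 - (∑ i ∈ Finset.range m, X i ω) / m) ∂μ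

/-- If `E[X̄_{m₁}/(1-X̄_{m₁})] < 1` for some `m₁ ≥ 1` (i.e. `BB(m₁)` condensates),
then `E[X̄_{m₂}/(1-X̄_{m₂})] < 1` for every `m₂ ≥ m₁` (i.e. `BB(m₂)` condensates). -/
theorem condensation_monotone_in_convolution
    {Ω : Type*} [MeasurableSpace Ω] (μ : Measure Ω) [IsProbabilityMeasure μ]
    (ν : Measure ℝ) [IsProbabilityMeasure ν]
    (X : ℕ → Ω → ℝ) (hmeas : ∀ i, Measurable (X i))
    (hindep : iIndepFun X μ)
    (hlaw : ∀ i, μ.map (X i) = ν)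
    (hsupp : ν (Set.Icc (0:ℝ) 1)ᶜ = 0)
    (m₁ : ℕ) (hm₁ : 1 ≤ m₁) (hcond : meanRatioInt μ X m₁ < 1) :
    ∀ m₂, m₁ ≤ m₂ → meanRatioInt μ X m₂ < 1 := by
  intro m₂ h12
  set P := (Finset.range m₂).powersetCard m₁ with hP
  have hPne : P.Nonempty := Finset.powersetCard_nonempty.2 (by simpa using h12)
  have hC0 : (P.card : ℝ≥0∞) ≠ 0 := by
    simp only [ne_eq, Nat.cast_eq_zero, Finset.card_eq_zero]
    exact fun h => (Finset.nonempty_iff_ne_empty.1 hPne) h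
  have hCtop : (P.card : ℝ≥0∞) ≠ ⊤ := ENNReal.natCast_ne_top _
  -- measurability of the "kernel" function
  have hG : Measurable (fun t : ℝ =>
      ENNReal.ofReal (t / m₁) / ENNReal.ofReal (1 - t / m₁)) := by
    fun_prop
  have Msum : ∀ S : Finset ℕ, Measurable (fun ω => ∑ i ∈ S, X i ω) :=
    fun S => Finset.measurable_sum S (fun i _ => hmeas i)
  -- a.e. all coordinates in [0,1]
  have hae : ∀ᵐ ω ∂μ, ∀ i ∈ Finset.range m₂, X i ω ∈ Set.Icc (0:ℝ) 1 := by
    have per : ∀ i, ∀ᵐ ω ∂μ, X i ω ∈ Set.Icc (0:ℝ) 1 := by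
      intro i
      have h0 : μ ((X i) ⁻¹' (Set.Icc (0:ℝ) 1)ᶜ) = 0 := by
        rw [← Measure.map_apply (hmeas i) measurableSet_Icc.compl, hlaw i]
        exact hsupp
      rw [ae_iff]
      convert h0 using 2
      rfl
    rw [ae_all_iff]
    intro i
    filter_upwards [per i] with ω hω _ using hω
  -- the integral of each subset term equals meanRatioInt μ X m₁
  have hterm : ∀ S ∈ P, (∫⁻ ω, ENNReal.ofReal ((∑ i ∈ S, X i ω) / m₁)
      / ENNReal.ofReal (1 - (∑ i ∈ S, X i ω) / m₁) ∂μ) = meanRatioInt μ X m₁ := by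
    intro S hS
    have hcard : S.card = m₁ := (Finset.mem_powersetCard.1 hS).2
    rw [← lintegral_map hG (Msum S),
      law_sum_card μ ν X hmeas hindep hlaw m₁ S hcard,
      lintegral_map hG (Msum (Finset.range m₁))]
    rfl
  -- main chain
  have hmono : meanRatioInt μ X m₂ ≤
      (∑ S ∈ P, ∫⁻ ω, ENNReal.ofReal ((∑ i ∈ S, X i ω) / m₁)
        / ENNReal.ofReal (1 - (∑ i ∈ S, X i ω) / m₁) ∂μ) / (P.card : ℝ≥0∞) := by
    calc meanRatioInt μ X m₂
        ≤ ∫⁻ ω, (∑ S ∈ P, ENNReal.ofReal ((∑ i ∈ S, X i ω) / m₁)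
            / ENNReal.ofReal (1 - (∑ i ∈ S, X i ω) / m₁)) / (P.card : ℝ≥0∞) ∂μ := by
          refine lintegral_mono_ae ?_
          filter_upwards [hae] with ω hω
          exact pointwise_bound m₁ m₂ hm₁ h12 (fun i => X i ω) hω
      _ = (∫⁻ ω, ∑ S ∈ P, ENNReal.ofReal ((∑ i ∈ S, X i ω) / m₁)
            / ENNReal.ofReal (1 - (∑ i ∈ S, X i ω) / m₁) ∂μ) / (P.card : ℝ≥0∞) := by
          simp only [div_eq_mul_inv]
          rw [lintegral_mul_const' _ _ (by simpa using hC0)]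
      _ = (∑ S ∈ P, ∫⁻ ω, ENNReal.ofReal ((∑ i ∈ S, X i ω) / m₁)
            / ENNReal.ofReal (1 - (∑ i ∈ S, X i ω) / m₁) ∂μ) / (P.card : ℝ≥0∞) := by
          rw [lintegral_finset_sum]
          intro S _
          exact hG.comp (Msum S)
  rw [Finset.sum_congr rfl hterm, Finset.sum_const, nsmul_eq_mul] at hmono
  rw [mul_comm, mul_div_assoc, ENNReal.div_self hC0 hCtop, mul_one] at hmono
  exact lt_of_le_of_lt hmono hcond
end

section
/- Let ν be a Borel probability measure on [0,1] and let (X_i)_{i≥1} be i.i.d. random variables with law ν; write X̄_m = (X₁+⋯+X_m)/m. Then the sequence m ↦ E[X̄_m/(1−X̄_m)] (with values in [0,∞]) is nonincreasing in m, i.e. for all integers 1 ≤ j ≤ i one has E[X̄_i/(1−X̄_i)] ≤ E[X̄_j/(1−X̄_j)]. -/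
open MeasureTheory ProbabilityTheory Filter
open scoped ENNReal

/-- The function `x ↦ x/(1-x)` valued in `[0,∞]`. -/
noncomputable def mrG (x : ℝ) : ℝ≥0∞ := ENNReal.ofReal x / ENNReal.ofReal (1 - x)

lemma mrG_measurable : Measurable mrG :=
  (ENNReal.measurable_ofReal.comp measurable_id).div
    (ENNReal.measurable_ofReal.comp (measurable_const.sub measurable_id))

lemma convexOn_ratio : ConvexOn ℝ (Set.Iio (1:ℝ)) (fun x => x / (1 - x)) := by
  have h1 : ConvexOn ℝ (Set.Ioi (0:ℝ)) (fun x : ℝ => x ^ (-1 : ℤ)) := convexOn_zpow (-1)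
  have h2 := h1.comp_affineMap ((AffineMap.lineMap (1:ℝ) (0:ℝ)) : ℝ →ᵃ[ℝ] ℝ)
  have hpre : ((AffineMap.lineMap (1:ℝ) (0:ℝ)) : ℝ →ᵃ[ℝ] ℝ) ⁻¹' Set.Ioi 0 = Set.Iio 1 := by
    ext x
    simp [AffineMap.lineMap_apply, sub_pos]
  rw [hpre] at h2
  have h3 : ConvexOn ℝ (Set.Iio (1:ℝ)) (fun x : ℝ => (1 - x)⁻¹) := by
    rw [show (fun x : ℝ => (1 - x)⁻¹) = (fun x : ℝ => x ^ (-1 : ℤ)) ∘ ⇑((AffineMap.lineMap (1:ℝ) (0:ℝ)) : ℝ →ᵃ[ℝ] ℝ) from ?_]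
    · exact h2
    ext x
    simp [AffineMap.lineMap_apply, Function.comp]
    ring_nf
  have h4 := h3.sub (concaveOn_const (1:ℝ) (convex_Iio 1))
  refine ⟨convex_Iio 1, fun x hx y hy a b ha hb hab => ?_⟩
  have hmem : a • x + b • y ∈ Set.Iio (1:ℝ) := (convex_Iio (1:ℝ)) hx hy ha hb hab
  have key := h4.2 hx hy ha hb hab
  have e : ∀ z : ℝ, z ∈ Set.Iio (1:ℝ) → z / (1 - z) = (1 - z)⁻¹ - 1 := by
    intro z hz
    have : (1:ℝ) - z ≠ 0 := by simp only [Set.mem_Iio] at hz; linarith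
    field_simp
    ring
  simp only [Pi.sub_apply, smul_eq_mul] at key hmem ⊢
  rw [e _ hx, e _ hy, e _ hmem]
  nlinarith [key]

lemma mrG_avg_le {α : Type*} (t : Finset α) (ht : t.Nonempty) (y : α → ℝ)
    (hy : ∀ a ∈ t, y a ∈ Set.Icc (0:ℝ) 1) :
    mrG ((∑ a ∈ t, y a) / t.card) ≤ (∑ a ∈ t, mrG (y a)) / t.card := by
  have hn0 : (t.card : ℝ) ≠ 0 := by
    exact_mod_cast Finset.card_ne_zero_of_mem ht.choose_spec
  have hnpos : (0:ℝ) < t.card := by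
    positivity
  by_cases hone : ∃ a ∈ t, y a = 1
  · obtain ⟨a, ha, hya⟩ := hone
    have htop : mrG (y a) = ⊤ := by
      rw [mrG, hya]
      simp
    have hsum : (∑ a ∈ t, mrG (y a)) = ⊤ :=
      ENNReal.sum_eq_top.2 ⟨a, ha, htop⟩
    rw [hsum, ENNReal.top_div_of_ne_top (by simp : (t.card : ℝ≥0∞) ≠ ⊤)]
    exact le_top
  · push_neg at hone
    have hlt : ∀ a ∈ t, y a < 1 := fun a ha =>
      lt_of_le_of_ne (hy a ha).2 (hone a ha)
    have hsumlt : (∑ a ∈ t, y a) < t.card := by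
      calc (∑ a ∈ t, y a) < ∑ _a ∈ t, (1:ℝ) := Finset.sum_lt_sum_of_nonempty ht hlt
      _ = t.card := by simp
    have havg1 : (∑ a ∈ t, y a) / t.card < 1 := by
      rw [div_lt_one hnpos]; exact hsumlt
    have havg0 : 0 ≤ (∑ a ∈ t, y a) / t.card := by
      apply div_nonneg _ hnpos.le
      exact Finset.sum_nonneg fun a ha => (hy a ha).1
    have hreal : ((∑ a ∈ t, y a) / t.card) / (1 - (∑ a ∈ t, y a) / t.card)
        ≤ (∑ a ∈ t, y a / (1 - y a)) / t.card := by
      have := convexOn_ratio.map_sum_le (t := t) (w := fun _ => (t.card : ℝ)⁻¹)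
        (p := y) (fun a _ => by positivity)
        (by rw [Finset.sum_const, nsmul_eq_mul]; field_simp)
        (fun a ha => hlt a ha)
      simp only [smul_eq_mul] at this
      calc ((∑ a ∈ t, y a) / t.card) / (1 - (∑ a ∈ t, y a) / t.card)
          = (∑ a ∈ t, (t.card:ℝ)⁻¹ * y a) / (1 - ∑ a ∈ t, (t.card:ℝ)⁻¹ * y a) := by
            rw [← Finset.mul_sum]; ring_nf
        _ ≤ ∑ a ∈ t, (t.card:ℝ)⁻¹ * (y a / (1 - y a)) := this
        _ = (∑ a ∈ t, y a / (1 - y a)) / t.card := by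
            rw [← Finset.mul_sum]; ring
    have hL : mrG ((∑ a ∈ t, y a) / t.card)
        = ENNReal.ofReal (((∑ a ∈ t, y a) / t.card) / (1 - (∑ a ∈ t, y a) / t.card)) := by
      rw [mrG]; exact (ENNReal.ofReal_div_of_pos (by linarith)).symm
    have hR : ∀ a ∈ t, mrG (y a) = ENNReal.ofReal (y a / (1 - y a)) := fun a ha => by
      rw [mrG]; exact (ENNReal.ofReal_div_of_pos (by have := hlt a ha; linarith)).symm
    rw [hL, Finset.sum_congr rfl hR,
      ← ENNReal.ofReal_sum_of_nonneg (fun a ha => by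
        have h0 := (hy a ha).1; have h1 := hlt a ha; exact div_nonneg h0 (by linarith)),
      show ((t.card : ℝ≥0∞)) = ENNReal.ofReal (t.card : ℝ) by simp,
      ← ENNReal.ofReal_div_of_pos hnpos]
    exact ENNReal.ofReal_le_ofReal hreal

lemma count_powersetCard_mem {α : Type*} [DecidableEq α] (s : Finset α) {j : ℕ} (hj : 1 ≤ j)
    {a : α} (ha : a ∈ s) :
    ((s.powersetCard j).filter (fun S => a ∈ S)).card = (s.card - 1).choose (j - 1) := by
  rw [show (s.card - 1).choose (j-1) = ((s.erase a).card).choose (j-1) by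
    rw [Finset.card_erase_of_mem ha], ← Finset.card_powersetCard (j-1) (s.erase a)]
  refine Finset.card_bij' (fun S _ => S.erase a) (fun T _ => insert a T) ?hi ?hj ?li ?ri
  case hi =>
    intro S hS
    simp only [Finset.mem_filter, Finset.mem_powersetCard] at hS
    simp only [Finset.mem_powersetCard]
    exact ⟨Finset.erase_subset_erase a hS.1.1, by
      rw [Finset.card_erase_of_mem hS.2, hS.1.2]⟩
  case hj =>
    intro T hT
    simp only [Finset.mem_powersetCard] at hT
    have haT : a ∉ T := fun h => (Finset.notMem_erase a s) (hT.1 h)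
    simp only [Finset.mem_filter, Finset.mem_powersetCard]
    refine ⟨⟨?_, ?_⟩, Finset.mem_insert_self a T⟩
    · intro x hx
      rcases Finset.mem_insert.1 hx with rfl | hx
      · exact ha
      · exact Finset.erase_subset a s (hT.1 hx)
    · rw [Finset.card_insert_of_notMem haT, hT.2]
      omega
  case li =>
    intro S hS
    simp only [Finset.mem_filter] at hS
    exact Finset.insert_erase hS.2
  case ri =>
    intro T hT
    simp only [Finset.mem_powersetCard] at hT
    exact Finset.erase_insert (fun h => (Finset.notMem_erase a s) (hT.1 h))

lemma sum_powersetCard_sum_s1 {α : Type*} [DecidableEq α] (s : Finset α) {j : ℕ} (hj : 1 ≤ j)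
    (f : α → ℝ) :
    ∑ S ∈ s.powersetCard j, ∑ a ∈ S, f a
      = ((s.card - 1).choose (j - 1) : ℝ) * ∑ a ∈ s, f a := by
  have step : ∀ S ∈ s.powersetCard j, ∑ a ∈ S, f a = ∑ a ∈ s, if a ∈ S then f a else 0 := by
    intro S hS
    rw [Finset.sum_ite_mem, Finset.inter_eq_right.2 (Finset.mem_powersetCard.1 hS).1]
  rw [Finset.sum_congr rfl step, Finset.sum_comm]
  rw [Finset.mul_sum]
  apply Finset.sum_congr rfl
  intro a ha
  rw [Finset.sum_ite, Finset.sum_const_zero, add_zero, Finset.sum_const,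
    count_powersetCard_mem s hj ha, nsmul_eq_mul]

lemma map_vec_eq_pi {Ω : Type*} [MeasurableSpace Ω] (μ : Measure Ω) [IsProbabilityMeasure μ]
    (ν : Measure ℝ) [IsProbabilityMeasure ν]
    (X : ℕ → Ω → ℝ) (hmeas : ∀ i, Measurable (X i))
    (hindep : iIndepFun X μ)
    (hlaw : ∀ i, μ.map (X i) = ν)
    {j : ℕ} (e : Fin j → ℕ) (he : Function.Injective e) :
    μ.map (fun ω (k : Fin j) => X (e k) ω) = Measure.pi (fun _ => ν) := by
  have hvec : Measurable (fun ω (k : Fin j) => X (e k) ω) :=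
    measurable_pi_lambda _ (fun k => hmeas (e k))
  haveI : IsProbabilityMeasure (μ.map (fun ω (k : Fin j) => X (e k) ω)) :=
    Measure.isProbabilityMeasure_map hvec.aemeasurable
  refine (Measure.pi_eq (μ := fun _ : Fin j => ν) (fun s hs => ?_)).symm
  classical
  set sets : ℕ → Set ℝ := fun n => ⋂ (k : Fin j) (_ : e k = n), s k with hsets
  have hsets_meas : ∀ n, MeasurableSet (sets n) :=
    fun n => MeasurableSet.iInter (fun k => MeasurableSet.iInter (fun _ => hs k))
  have hsets_e : ∀ k : Fin j, sets (e k) = s k := by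
    intro k
    apply Set.Subset.antisymm
    · intro x hx
      exact Set.mem_iInter.1 (Set.mem_iInter.1 hx k) rfl
    · intro x hx
      refine Set.mem_iInter.2 fun k' => Set.mem_iInter.2 fun hk' => ?_
      rwa [he hk']
  set T : Finset ℕ := Finset.univ.map ⟨e, he⟩ with hT
  have key := hindep.measure_inter_preimage_eq_mul T (sets := sets)
    (fun n _ => hsets_meas n)
  have hpre : (fun ω (k : Fin j) => X (e k) ω) ⁻¹' (Set.univ.pi s)
      = ⋂ n ∈ T, X n ⁻¹' sets n := by
    ext ω
    simp only [Set.mem_preimage, Set.mem_pi, Set.mem_univ, forall_true_left,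
      Set.mem_iInter, hT, Finset.mem_map, Finset.mem_univ, true_and,
      Function.Embedding.coeFn_mk]
    constructor
    · rintro h n ⟨k, rfl⟩
      rw [hsets_e k]
      exact h k
    · intro h k
      have := h (e k) ⟨k, rfl⟩
      rwa [hsets_e k] at this
  rw [Measure.map_apply hvec (MeasurableSet.univ_pi hs), hpre, key]
  rw [Finset.prod_map]
  simp only [Function.Embedding.coeFn_mk]
  apply Finset.prod_congr rfl
  intro k _
  rw [hsets_e k, ← hlaw (e k), Measure.map_apply (hmeas (e k)) (hs k)]

lemma lintegral_comp_sum {Ω : Type*} [MeasurableSpace Ω] (μ : Measure Ω) [IsProbabilityMeasure μ]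
    (ν : Measure ℝ) [IsProbabilityMeasure ν]
    (X : ℕ → Ω → ℝ) (hmeas : ∀ i, Measurable (X i))
    (hindep : iIndepFun X μ)
    (hlaw : ∀ i, μ.map (X i) = ν)
    {j : ℕ} (e : Fin j → ℕ) (he : Function.Injective e)
    (F : ℝ → ℝ≥0∞) (hF : Measurable F) :
    ∫⁻ ω, F (∑ k : Fin j, X (e k) ω) ∂μ = ∫⁻ ω, F (∑ a ∈ Finset.range j, X a ω) ∂μ := by
  have hGm : Measurable (fun v : Fin j → ℝ => F (∑ k, v k)) :=
    hF.comp (Finset.measurable_sum Finset.univ (fun k _ => measurable_pi_apply k))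
  have h1 : ∀ (e' : Fin j → ℕ), Function.Injective e' →
      ∫⁻ ω, F (∑ k : Fin j, X (e' k) ω) ∂μ
        = ∫⁻ v : Fin j → ℝ, F (∑ k, v k) ∂(Measure.pi fun _ => ν) := by
    intro e' he'
    have hvec : Measurable (fun ω (k : Fin j) => X (e' k) ω) :=
      measurable_pi_lambda _ (fun k => hmeas (e' k))
    rw [← map_vec_eq_pi μ ν X hmeas hindep hlaw e' he', lintegral_map hGm hvec]
  rw [h1 e he, ← h1 (fun k => (k : ℕ)) (fun a b h => Fin.val_injective h)]
  apply lintegral_congr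
  intro ω
  congr 1
  exact Fin.sum_univ_eq_sum_range (fun a => X a ω) j

/-- The sequence `m ↦ E[X̄_m/(1-X̄_m)]` (with values in `[0,∞]`) is nonincreasing:
for all integers `1 ≤ j ≤ i`, `E[X̄_i/(1-X̄_i)] ≤ E[X̄_j/(1-X̄_j)]`. -/
theorem meanRatioInt_antitone
    {Ω : Type*} [MeasurableSpace Ω] (μ : Measure Ω) [IsProbabilityMeasure μ]
    (ν : Measure ℝ) [IsProbabilityMeasure ν]
    (X : ℕ → Ω → ℝ) (hmeas : ∀ i, Measurable (X i))
    (hindep : iIndepFun X μ)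
    (hlaw : ∀ i, μ.map (X i) = ν)
    (hsupp : ν (Set.Icc (0:ℝ) 1)ᶜ = 0) :
    ∀ i j : ℕ, 1 ≤ j → j ≤ i → meanRatioInt μ X i ≤ meanRatioInt μ X j := by
  intro i j hj hij
  classical
  have hi : 1 ≤ i := hj.trans hij
  have hi0 : (i:ℝ) ≠ 0 := Nat.cast_ne_zero.2 (by omega)
  have hj0 : (j:ℝ) ≠ 0 := Nat.cast_ne_zero.2 (by omega)
  have hjpos : (0:ℝ) < j := by positivity
  set P : Finset (Finset ℕ) := (Finset.range i).powersetCard j with hPdef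
  have hPcard : P.card = i.choose j := by
    rw [hPdef, Finset.card_powersetCard, Finset.card_range]
  have hCpos : 0 < i.choose j := Nat.choose_pos hij
  have hPne : P.Nonempty := by
    rw [hPdef]
    exact Finset.powersetCard_nonempty.2 (by rw [Finset.card_range]; exact hij)
  have hC0 : (i.choose j : ℝ) ≠ 0 := Nat.cast_ne_zero.2 hCpos.ne'
  have hnat : i * ((i-1).choose (j-1)) = i.choose j * j := by
    obtain ⟨i', rfl⟩ : ∃ i', i = i' + 1 := ⟨i - 1, by omega⟩
    obtain ⟨j', rfl⟩ : ∃ j', j = j' + 1 := ⟨j - 1, by omega⟩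
    simpa using Nat.add_one_mul_choose_eq i' j'
  have hmS : ∀ S : Finset ℕ, Measurable (fun ω => mrG ((∑ a ∈ S, X a ω) / (j:ℝ))) := fun S =>
    mrG_measurable.comp ((Finset.measurable_sum S (fun a _ => hmeas a)).div_const _)
  have hgood : ∀ᵐ ω ∂μ, ∀ a, X a ω ∈ Set.Icc (0:ℝ) 1 := by
    rw [ae_all_iff]
    intro a
    rw [ae_iff]
    have hset : {ω | ¬ X a ω ∈ Set.Icc (0:ℝ) 1} = X a ⁻¹' (Set.Icc (0:ℝ) 1)ᶜ := rfl
    rw [hset, ← Measure.map_apply (hmeas a) measurableSet_Icc.compl, hlaw a]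
    exact hsupp
  have hae : ∀ᵐ ω ∂μ, mrG ((∑ a ∈ Finset.range i, X a ω) / (i:ℝ))
      ≤ (∑ S ∈ P, mrG ((∑ a ∈ S, X a ω) / (j:ℝ))) / (P.card : ℝ≥0∞) := by
    filter_upwards [hgood] with ω hω
    have hy : ∀ S ∈ P, (∑ a ∈ S, X a ω) / (j:ℝ) ∈ Set.Icc (0:ℝ) 1 := by
      intro S hS
      obtain ⟨hSsub, hScard⟩ := Finset.mem_powersetCard.1 hS
      constructor
      · exact div_nonneg (Finset.sum_nonneg fun a _ => (hω a).1) hjpos.le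
      · rw [div_le_one hjpos]
        calc ∑ a ∈ S, X a ω ≤ ∑ _a ∈ S, (1:ℝ) := Finset.sum_le_sum fun a _ => (hω a).2
          _ = j := by rw [Finset.sum_const, hScard]; simp
    have havg : (∑ S ∈ P, (∑ a ∈ S, X a ω) / (j:ℝ)) / (P.card : ℝ)
        = (∑ a ∈ Finset.range i, X a ω) / (i:ℝ) := by
      rw [← Finset.sum_div, hPdef, sum_powersetCard_sum_s1 _ hj, Finset.card_range,
        Finset.card_powersetCard, Finset.card_range]
      have hc : (i:ℝ) * (((i-1).choose (j-1) : ℕ) : ℝ) = ((i.choose j : ℕ) : ℝ) * j := by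
        exact_mod_cast hnat
      rw [div_div, div_eq_div_iff (by positivity) hi0]
      linear_combination (∑ a ∈ Finset.range i, X a ω) * hc
    have := mrG_avg_le P hPne (fun S => (∑ a ∈ S, X a ω) / (j:ℝ)) hy
    rw [havg] at this
    exact this
  have hSint : ∀ S ∈ P, ∫⁻ ω, mrG ((∑ a ∈ S, X a ω) / (j:ℝ)) ∂μ = meanRatioInt μ X j := by
    intro S hS
    obtain ⟨hSsub, hScard⟩ := Finset.mem_powersetCard.1 hS
    set e : Fin j → ℕ := fun k => ((S.orderIsoOfFin hScard k : ℕ)) with he_def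
    have he : Function.Injective e := fun k l h =>
      (S.orderIsoOfFin hScard).injective (Subtype.ext h)
    have hsum : ∀ ω, ∑ a ∈ S, X a ω = ∑ k : Fin j, X (e k) ω := by
      intro ω
      rw [← Finset.sum_coe_sort S (fun a => X a ω)]
      exact (Fintype.sum_equiv (S.orderIsoOfFin hScard).toEquiv _ _ (fun k => rfl)).symm
    simp_rw [hsum]
    rw [lintegral_comp_sum μ ν X hmeas hindep hlaw e he (fun x => mrG (x / (j:ℝ)))
      (mrG_measurable.comp (measurable_id.div_const _))]
    simp only [meanRatioInt, mrG]
  calc meanRatioInt μ X i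
      ≤ ∫⁻ ω, (∑ S ∈ P, mrG ((∑ a ∈ S, X a ω) / (j:ℝ))) / (P.card : ℝ≥0∞) ∂μ := by
        rw [show meanRatioInt μ X i
            = ∫⁻ ω, mrG ((∑ a ∈ Finset.range i, X a ω) / (i:ℝ)) ∂μ by
          simp only [meanRatioInt, mrG]]
        exact lintegral_mono_ae hae
    _ = (∑ S ∈ P, ∫⁻ ω, mrG ((∑ a ∈ S, X a ω) / (j:ℝ)) ∂μ) / (P.card : ℝ≥0∞) := by
        have hdiv : ∀ x : ℝ≥0∞, x / (P.card : ℝ≥0∞) = x * (P.card : ℝ≥0∞)⁻¹ :=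
          fun x => div_eq_mul_inv x _
        simp_rw [hdiv]
        rw [lintegral_mul_const _ (Finset.measurable_sum P fun S _ => hmS S),
          lintegral_finset_sum P (fun S _ => hmS S)]
    _ = ((P.card : ℝ≥0∞) * meanRatioInt μ X j) / (P.card : ℝ≥0∞) := by
        rw [Finset.sum_congr rfl hSint, Finset.sum_const, nsmul_eq_mul]
    _ = meanRatioInt μ X j := by
        have hne : (P.card : ℝ≥0∞) ≠ 0 := by
          rw [hPcard]
          exact_mod_cast Nat.cast_ne_zero.2 hCpos.ne'
        rw [mul_comm, mul_div_assoc, ENNReal.div_self hne (by simp), mul_one]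
end

section
/- Let ν be a Borel probability measure on [0,1] with ∫₀¹ x/(1−x) dν(x) < ∞, let (X_i)_{i≥1} be i.i.d. random variables with law ν, write X̄_m = (X₁+⋯+X_m)/m and μ = ∫₀¹ x dν(x). Then lim_{m→∞} E[X̄_m/(1−X̄_m)] = μ/(1−μ). -/
open MeasureTheory ProbabilityTheory Filter
open scoped ENNReal

/- Auxiliary: convexity of `t ↦ (1-t)⁻¹` on `Iio 1`. -/
lemma convexOn_one_sub_inv : ConvexOn ℝ (Set.Iio (1:ℝ)) (fun t => (1 - t)⁻¹) := by
  have h1 : ConvexOn ℝ (Set.Ioi (0:ℝ)) (fun y : ℝ => y⁻¹) := by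
    have := (strictConvexOn_zpow (m := -1) (by decide) (by decide)).convexOn
    simpa using this
  refine ⟨convex_Iio 1, fun x hx y hy a b ha hb hab => ?_⟩
  have h := h1.2 (show (1:ℝ) - x ∈ Set.Ioi 0 from Set.mem_Ioi.2 (sub_pos.2 hx))
    (show (1:ℝ) - y ∈ Set.Ioi 0 from Set.mem_Ioi.2 (sub_pos.2 hy)) ha hb hab
  simp only [smul_eq_mul] at h ⊢
  have heq : 1 - (a * x + b * y) = a * (1 - x) + b * (1 - y) := by
    have : a + b = 1 := hab
    ring_nf
    linarith [this]
  rw [heq]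
  exact h

/- Auxiliary: Jensen's inequality for `x ↦ x/(1-x)` with equal weights. -/
lemma ratio_avg_le_s3 {m : ℕ} (hm : 0 < m) (x : ℕ → ℝ)
    (hx : ∀ i ∈ Finset.range m, x i ∈ Set.Ico (0:ℝ) 1) :
    ((∑ i ∈ Finset.range m, x i) / m) / (1 - (∑ i ∈ Finset.range m, x i) / m)
      ≤ (∑ i ∈ Finset.range m, x i / (1 - x i)) / m := by
  have hmR : (0:ℝ) < m := Nat.cast_pos.2 hm
  set s := ∑ i ∈ Finset.range m, x i with hs
  have hslt : s / m < 1 := by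
    rw [div_lt_one hmR]
    calc s < ∑ _i ∈ Finset.range m, (1:ℝ) :=
          Finset.sum_lt_sum_of_nonempty (Finset.nonempty_range_iff.2 hm.ne') (fun i hi => (hx i hi).2)
      _ = m := by simp
  have key : ∀ t : ℝ, t < 1 → t / (1 - t) = (1 - t)⁻¹ - 1 := by
    intro t ht
    have h0 : (1:ℝ) - t ≠ 0 := by linarith
    field_simp
    ring
  have hjen := convexOn_one_sub_inv.map_sum_le (t := Finset.range m)
      (w := fun _ => (m:ℝ)⁻¹) (p := x) (fun i _ => by positivity)
      (by simp [Finset.sum_const, Finset.card_range]; field_simp)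
      (fun i hi => (hx i hi).2)
  have hsum1 : ∑ i ∈ Finset.range m, (m:ℝ)⁻¹ • x i = s / m := by
    rw [← Finset.smul_sum, smul_eq_mul, ← hs, inv_mul_eq_div]
  have hsum2 : ∑ i ∈ Finset.range m, (m:ℝ)⁻¹ • (1 - x i)⁻¹
      = (∑ i ∈ Finset.range m, (1 - x i)⁻¹) / m := by
    rw [← Finset.smul_sum, smul_eq_mul, inv_mul_eq_div]
  rw [hsum1, hsum2] at hjen
  have hrw : ∑ i ∈ Finset.range m, x i / (1 - x i)
      = ∑ i ∈ Finset.range m, ((1 - x i)⁻¹ - 1) :=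
    Finset.sum_congr rfl fun i hi => key _ (hx i hi).2
  rw [hrw, key _ hslt, Finset.sum_sub_distrib, Finset.sum_const, Finset.card_range,
    nsmul_eq_mul, mul_one, sub_div, div_self hmR.ne']
  exact sub_le_sub_right hjen 1

/- Auxiliary: generalized dominated convergence in `ℝ≥0∞` with dominating
sequence of constant integral. -/
lemma gdc_aux {Ω : Type*} [MeasurableSpace Ω] (μ : Measure Ω)
    (f h : ℕ → Ω → ℝ≥0∞) (F H : Ω → ℝ≥0∞) {C : ℝ≥0∞} (hC : C ≠ ∞)
    (hfm : ∀ n, AEMeasurable (f n) μ) (hhm : ∀ n, AEMeasurable (h n) μ)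
    (hle : ∀ n, f n ≤ᵐ[μ] h n)
    (hf : ∀ᵐ ω ∂μ, Tendsto (fun n => f n ω) atTop (nhds (F ω)))
    (hh : ∀ᵐ ω ∂μ, Tendsto (fun n => h n ω) atTop (nhds (H ω)))
    (hHtop : ∀ᵐ ω ∂μ, H ω ≠ ∞)
    (hhint : ∀ᶠ n in atTop, ∫⁻ ω, h n ω ∂μ = C)
    (hHint : ∫⁻ ω, H ω ∂μ = C) :
    Tendsto (fun n => ∫⁻ ω, f n ω ∂μ) atTop (nhds (∫⁻ ω, F ω ∂μ)) := by
  have hFm : AEMeasurable F μ := aemeasurable_of_tendsto_metrizable_ae atTop hfm hf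
  have hall : ∀ᵐ ω ∂μ, ∀ n, f n ω ≤ h n ω := ae_all_iff.2 hle
  have hFH : F ≤ᵐ[μ] H := by
    filter_upwards [hf, hh, hall] with ω h1 h2 h3
    exact le_of_tendsto_of_tendsto' h1 h2 h3
  have hFle : ∫⁻ ω, F ω ∂μ ≤ C := hHint ▸ lintegral_mono_ae hFH
  have hFtop : ∫⁻ ω, F ω ∂μ ≠ ∞ := (lt_of_le_of_lt hFle hC.lt_top).ne
  have hlim1 : ∫⁻ ω, F ω ∂μ ≤ liminf (fun n => ∫⁻ ω, f n ω ∂μ) atTop := by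
    calc ∫⁻ ω, F ω ∂μ = ∫⁻ ω, liminf (fun n => f n ω) atTop ∂μ :=
          lintegral_congr_ae (by filter_upwards [hf] with ω h1; exact h1.liminf_eq.symm)
      _ ≤ _ := lintegral_liminf_le' hfm
  have hfint : ∀ᶠ n in atTop, ∫⁻ ω, f n ω ∂μ ≤ C := by
    filter_upwards [hhint] with n hn
    exact hn ▸ lintegral_mono_ae (hle n)
  have hlimsupC : limsup (fun n => ∫⁻ ω, f n ω ∂μ) atTop ≤ C :=
    limsup_le_of_le (by isBoundedDefault) hfint
  have fatou2 : ∫⁻ ω, (H ω - F ω) ∂μ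
      ≤ liminf (fun n => ∫⁻ ω, (h n ω - f n ω) ∂μ) atTop := by
    calc ∫⁻ ω, (H ω - F ω) ∂μ = ∫⁻ ω, liminf (fun n => h n ω - f n ω) atTop ∂μ := by
          refine lintegral_congr_ae ?_
          filter_upwards [hf, hh, hHtop] with ω h1 h2 h3
          exact ((ENNReal.Tendsto.sub h2 h1 (Or.inl h3)).liminf_eq).symm
      _ ≤ _ := lintegral_liminf_le' (fun n => (hhm n).sub (hfm n))
  have hHF : ∫⁻ ω, (H ω - F ω) ∂μ = C - ∫⁻ ω, F ω ∂μ := by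
    rw [lintegral_sub' hFm hFtop hFH, hHint]
  have hhf : ∀ᶠ n in atTop, ∫⁻ ω, (h n ω - f n ω) ∂μ = C - ∫⁻ ω, f n ω ∂μ := by
    filter_upwards [hhint, hfint] with n h1 h2
    rw [lintegral_sub' (hfm n) (lt_of_le_of_lt h2 hC.lt_top).ne (hle n), h1]
  have hkey : liminf (fun n => ∫⁻ ω, (h n ω - f n ω) ∂μ) atTop
      = C - limsup (fun n => ∫⁻ ω, f n ω ∂μ) atTop := by
    rw [liminf_congr hhf]
    exact ENNReal.liminf_const_sub atTop _ hC
  have hlim2 : limsup (fun n => ∫⁻ ω, f n ω ∂μ) atTop ≤ ∫⁻ ω, F ω ∂μ := by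
    have h4 : C - ∫⁻ ω, F ω ∂μ ≤ C - limsup (fun n => ∫⁻ ω, f n ω ∂μ) atTop := by
      rw [← hkey, ← hHF]; exact fatou2
    exact (ENNReal.sub_le_sub_iff_left hlimsupC hC).1 h4
  exact tendsto_of_le_liminf_of_limsup_le hlim1 hlim2

/-- If `∫₀¹ x/(1-x) dν(x) < ∞` then, with `μ_ε = ∫₀¹ x dν(x)`,
`lim_{m→∞} E[X̄_m/(1-X̄_m)] = μ_ε/(1-μ_ε)`. -/
theorem meanRatioInt_tendsto
    {Ω : Type*} [MeasurableSpace Ω] (μ : Measure Ω) [IsProbabilityMeasure μ]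
    (ν : Measure ℝ) [IsProbabilityMeasure ν]
    (X : ℕ → Ω → ℝ) (hmeas : ∀ i, Measurable (X i))
    (hindep : iIndepFun X μ)
    (hlaw : ∀ i, μ.map (X i) = ν)
    (hsupp : ν (Set.Icc (0:ℝ) 1)ᶜ = 0)
    (hint : (∫⁻ x, ENNReal.ofReal x / ENNReal.ofReal (1 - x) ∂ν) < ⊤) :
    Tendsto (fun m => meanRatioInt μ X m) atTop
      (nhds (ENNReal.ofReal ((∫ x, x ∂ν) / (1 - ∫ x, x ∂ν)))) := by
  classical
  set A : ℝ := ∫ x, x ∂ν with hA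
  set G : ℝ → ℝ := fun x => x / (1 - x) with hG
  have hGmeas : Measurable G := measurable_id.div (measurable_const.sub measurable_id)
  -- ν {1} = 0
  have h1 : ν {(1:ℝ)} = 0 := by
    by_contra hne
    have hsing : ∫⁻ x in {(1:ℝ)}, ENNReal.ofReal x / ENNReal.ofReal (1 - x) ∂ν
        ≤ ∫⁻ x, ENNReal.ofReal x / ENNReal.ofReal (1 - x) ∂ν := setLIntegral_le_lintegral _ _
    rw [lintegral_singleton] at hsing
    have hv : ENNReal.ofReal 1 / ENNReal.ofReal (1 - 1) = ∞ := by
      norm_num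
    rw [hv, ENNReal.top_mul hne] at hsing
    exact hint.ne (top_le_iff.1 hsing)
  have hIco : ν (Set.Ico (0:ℝ) 1)ᶜ = 0 := by
    have hsub : (Set.Ico (0:ℝ) 1)ᶜ ⊆ (Set.Icc (0:ℝ) 1)ᶜ ∪ {1} := by
      intro x hx
      by_cases hIcc : x ∈ Set.Icc (0:ℝ) 1
      · right
        simp only [Set.mem_compl_iff, Set.mem_Ico, not_and, not_lt] at hx
        exact Set.mem_singleton_iff.2 (le_antisymm hIcc.2 (hx hIcc.1))
      · exact Or.inl hIcc
    exact measure_mono_null hsub (measure_union_null hsupp h1)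
  have hνIco : ∀ᵐ x ∂ν, x ∈ Set.Ico (0:ℝ) 1 := by
    rw [ae_iff]
    exact hIco
  have hXmem : ∀ i, ∀ᵐ ω ∂μ, X i ω ∈ Set.Ico (0:ℝ) 1 := by
    intro i
    have hmap : μ (X i ⁻¹' (Set.Ico (0:ℝ) 1)ᶜ) = 0 := by
      rw [← Measure.map_apply (hmeas i) measurableSet_Ico.compl, hlaw i]
      exact hIco
    rw [ae_iff]
    exact hmap
  have hS : ∀ᵐ ω ∂μ, ∀ i, X i ω ∈ Set.Ico (0:ℝ) 1 := ae_all_iff.2 hXmem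
  -- integrability and SLLN for X
  have hXint : Integrable (X 0) μ := by
    refine Integrable.mono' (integrable_const (1:ℝ)) (hmeas 0).aestronglyMeasurable ?_
    filter_upwards [hXmem 0] with ω hω
    rw [Real.norm_eq_abs, abs_of_nonneg hω.1]
    exact hω.2.le
  have hident : ∀ i, IdentDistrib (X i) (X 0) μ μ := fun i =>
    ⟨(hmeas i).aemeasurable, (hmeas 0).aemeasurable, by rw [hlaw i, hlaw 0]⟩
  have hpair : Pairwise (Function.onFun (IndepFun · · μ) X) := fun i j hij => hindep.indepFun hij
  have hEX : ∫ ω, X 0 ω ∂μ = A := by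
    have hmap := integral_map (μ := μ) (φ := X 0) (f := fun x : ℝ => x)
      (hmeas 0).aemeasurable aestronglyMeasurable_id
    rw [hlaw 0] at hmap
    rw [hA, ← hmap]
  have hslln1 : ∀ᵐ ω ∂μ, Tendsto (fun n : ℕ => (∑ i ∈ Finset.range n, X i ω) / n)
      atTop (nhds A) := by
    have := strong_law_ae_real X hXint hpair hident
    rwa [hEX] at this
  -- G integral facts
  have hCeq : ∫⁻ x, ENNReal.ofReal (G x) ∂ν
      = ∫⁻ x, ENNReal.ofReal x / ENNReal.ofReal (1 - x) ∂ν := by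
    refine lintegral_congr_ae ?_
    filter_upwards [hνIco] with x hx
    exact ENNReal.ofReal_div_of_pos (by linarith [hx.2])
  set C : ℝ≥0∞ := ∫⁻ x, ENNReal.ofReal x / ENNReal.ofReal (1 - x) ∂ν with hCdef
  have hCne : C ≠ ∞ := hint.ne
  have hGnn : 0 ≤ᵐ[ν] G := by
    filter_upwards [hνIco] with x hx
    exact div_nonneg hx.1 (by linarith [hx.2])
  have hGint : Integrable G ν := by
    refine ⟨hGmeas.aestronglyMeasurable, ?_⟩
    rw [hasFiniteIntegral_iff_ofReal hGnn, hCeq]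
    exact hint
  have hYint : Integrable (fun ω => G (X 0 ω)) μ := by
    have h3 : Integrable G (μ.map (X 0)) := by rw [hlaw 0]; exact hGint
    exact (integrable_map_measure hGmeas.aestronglyMeasurable (hmeas 0).aemeasurable).1 h3
  set B : ℝ := ∫ x, G x ∂ν with hB
  have hBC : ENNReal.ofReal B = C := by
    rw [hB, ofReal_integral_eq_lintegral_ofReal hGint hGnn, hCeq]
  have hEY : ∫ ω, G (X 0 ω) ∂μ = B := by
    rw [hB, ← hlaw 0, integral_map (hmeas 0).aemeasurable hGmeas.aestronglyMeasurable]
  have hYpair : Pairwise (Function.onFun (IndepFun · · μ) (fun i ω => G (X i ω))) :=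
    fun i j hij => (hindep.indepFun hij).comp hGmeas hGmeas
  have hYident : ∀ i, IdentDistrib (fun ω => G (X i ω)) (fun ω => G (X 0 ω)) μ μ :=
    fun i => (hident i).comp hGmeas
  have hslln2 : ∀ᵐ ω ∂μ, Tendsto (fun n : ℕ => (∑ i ∈ Finset.range n, G (X i ω)) / n)
      atTop (nhds B) := by
    have := strong_law_ae_real (fun i ω => G (X i ω)) hYint hYpair hYident
    rwa [hEY] at this
  -- bounds on A
  have hidInt : Integrable (fun x : ℝ => x) ν := by
    refine Integrable.mono' (integrable_const (1:ℝ)) aestronglyMeasurable_id ?_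
    filter_upwards [hνIco] with x hx
    rw [Real.norm_eq_abs, abs_of_nonneg hx.1]
    exact hx.2.le
  have hA0 : 0 ≤ A :=
    integral_nonneg_of_ae (by filter_upwards [hνIco] with x hx; exact hx.1)
  have hA1 : A < 1 := by
    by_contra hcon
    push_neg at hcon
    have hnn : 0 ≤ᵐ[ν] (fun x : ℝ => 1 - x) := by
      filter_upwards [hνIco] with x hx
      show (0:ℝ) ≤ 1 - x
      linarith [hx.2]
    have hsubint : Integrable (fun x : ℝ => 1 - x) ν := (integrable_const 1).sub hidInt
    have hval : ∫ x, (1 - x) ∂ν = 1 - A := by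
      rw [integral_sub (integrable_const 1) hidInt]
      simp [hA]
    have h0 : ∫ x, (1 - x) ∂ν = 0 :=
      le_antisymm (by rw [hval]; linarith) (integral_nonneg_of_ae hnn)
    have hae := (integral_eq_zero_iff_of_nonneg_ae hnn hsubint).1 h0
    have hone : ∀ᵐ x ∂ν, x = 1 := by
      filter_upwards [hae] with x hx
      have : (1:ℝ) - x = 0 := hx
      linarith
    have h1c : ν ({(1:ℝ)}ᶜ) = 0 := by
      rw [ae_iff] at hone
      convert hone using 2
      ext; simp
    have : (1:ℝ≥0∞) ≤ 0 := by
      calc (1:ℝ≥0∞) = ν Set.univ := measure_univ.symm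
        _ ≤ ν {(1:ℝ)} + ν ({(1:ℝ)}ᶜ) := by
            rw [← Set.union_compl_self ({(1:ℝ)} : Set ℝ)]
            exact measure_union_le _ _
        _ = 0 := by rw [h1, h1c, add_zero]
    simp at this
  have hA1' : (0:ℝ) < 1 - A := by linarith
  -- sequences for dominated convergence
  set f : ℕ → Ω → ℝ≥0∞ := fun m ω => ENNReal.ofReal ((∑ i ∈ Finset.range m, X i ω) / m) /
      ENNReal.ofReal (1 - (∑ i ∈ Finset.range m, X i ω) / m) with hfdef
  set h : ℕ → Ω → ℝ≥0∞ := fun m ω =>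
      ENNReal.ofReal ((∑ i ∈ Finset.range m, G (X i ω)) / m) with hhdef
  have hsummeas : ∀ m : ℕ, Measurable (fun ω => (∑ i ∈ Finset.range m, X i ω) / (m:ℝ)) :=
    fun m => (Finset.measurable_sum _ (fun i _ => hmeas i)).div_const _
  have hfm : ∀ m, AEMeasurable (f m) μ := by
    intro m
    exact ((ENNReal.measurable_ofReal.comp (hsummeas m)).div
      (ENNReal.measurable_ofReal.comp (measurable_const.sub (hsummeas m)))).aemeasurable
  have hhm : ∀ m, AEMeasurable (h m) μ := by
    intro m
    exact (ENNReal.measurable_ofReal.comp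
      ((Finset.measurable_sum _ (fun i _ => hGmeas.comp (hmeas i))).div_const _)).aemeasurable
  have hle : ∀ m, f m ≤ᵐ[μ] h m := by
    intro m
    filter_upwards [hS] with ω hω
    rcases Nat.eq_zero_or_pos m with rfl | hm
    · simp [hfdef, hhdef]
    · have hlt : (∑ i ∈ Finset.range m, X i ω) / (m:ℝ) < 1 := by
        rw [div_lt_one (by exact_mod_cast hm)]
        calc (∑ i ∈ Finset.range m, X i ω) < ∑ _i ∈ Finset.range m, (1:ℝ) :=
              Finset.sum_lt_sum_of_nonempty (Finset.nonempty_range_iff.2 hm.ne') (fun i _ => (hω i).2)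
          _ = m := by simp
      show ENNReal.ofReal _ / ENNReal.ofReal _ ≤ ENNReal.ofReal _
      rw [← ENNReal.ofReal_div_of_pos (by linarith)]
      exact ENNReal.ofReal_le_ofReal (ratio_avg_le_s3 hm (fun i => X i ω) (fun i _ => hω i))
  have hftend : ∀ᵐ ω ∂μ, Tendsto (fun m => f m ω) atTop
      (nhds (ENNReal.ofReal A / ENNReal.ofReal (1 - A))) := by
    filter_upwards [hslln1] with ω hω
    refine ENNReal.Tendsto.div ((ENNReal.continuous_ofReal.tendsto A).comp hω)
      (Or.inr (by simp [ENNReal.ofReal_pos.2 hA1', (ENNReal.ofReal_pos.2 hA1').ne']))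
      ((ENNReal.continuous_ofReal.tendsto (1 - A)).comp (tendsto_const_nhds.sub hω))
      (Or.inl ENNReal.ofReal_ne_top)
  have hhtend : ∀ᵐ ω ∂μ, Tendsto (fun m => h m ω) atTop (nhds (ENNReal.ofReal B)) := by
    filter_upwards [hslln2] with ω hω
    exact (ENNReal.continuous_ofReal.tendsto B).comp hω
  have hterm : ∀ i, ∫⁻ ω, ENNReal.ofReal (G (X i ω)) ∂μ = C := by
    intro i
    have := lintegral_map (μ := μ) (f := fun x => ENNReal.ofReal (G x))
      (ENNReal.measurable_ofReal.comp hGmeas) (hmeas i)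
    rw [hlaw i] at this
    rw [← this, hCeq]
  have hhint2 : ∀ᶠ m in atTop, ∫⁻ ω, h m ω ∂μ = C := by
    filter_upwards [eventually_gt_atTop 0] with m hm
    have hm0 : ((m:ℝ≥0∞)) ≠ 0 := by exact_mod_cast hm.ne'
    have hmtop : ((m:ℝ≥0∞)) ≠ ∞ := ENNReal.natCast_ne_top m
    have hcalc : ∀ᵐ ω ∂μ, h m ω
        = (∑ i ∈ Finset.range m, ENNReal.ofReal (G (X i ω))) / (m : ℝ≥0∞) := by
      filter_upwards [hS] with ω hω
      show ENNReal.ofReal _ = _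
      rw [ENNReal.ofReal_div_of_pos (by exact_mod_cast hm),
        ENNReal.ofReal_sum_of_nonneg
          (fun i _ => div_nonneg (hω i).1 (by linarith [(hω i).2])),
        ENNReal.ofReal_natCast]
    rw [lintegral_congr_ae hcalc]
    simp only [div_eq_mul_inv]
    have hsumAE : AEMeasurable (fun ω => ∑ i ∈ Finset.range m, ENNReal.ofReal (G (X i ω))) μ := by
      apply Finset.aemeasurable_fun_sum
      intro i _
      exact (ENNReal.measurable_ofReal.comp (hGmeas.comp (hmeas i))).aemeasurable
    have hAEi : ∀ i ∈ Finset.range m, AEMeasurable (fun ω => ENNReal.ofReal (G (X i ω))) μ :=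
      fun i _ => (ENNReal.measurable_ofReal.comp (hGmeas.comp (hmeas i))).aemeasurable
    rw [lintegral_mul_const'' _ hsumAE, lintegral_finset_sum' _ hAEi]
    have : ∑ i ∈ Finset.range m, ∫⁻ ω, ENNReal.ofReal (G (X i ω)) ∂μ = m * C := by
      rw [Finset.sum_congr rfl (fun i _ => hterm i)]
      simp [Finset.sum_const, Finset.card_range, nsmul_eq_mul]
    rw [this, mul_comm, ← mul_assoc, ENNReal.inv_mul_cancel hm0 hmtop, one_mul]
  have hHint2 : ∫⁻ _ω, (ENNReal.ofReal B) ∂μ = C := by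
    simp [lintegral_const, hBC]
  have main := gdc_aux μ f h (fun _ => ENNReal.ofReal A / ENNReal.ofReal (1 - A))
    (fun _ => ENNReal.ofReal B) hCne hfm hhm hle hftend hhtend
    (Eventually.of_forall fun _ => ENNReal.ofReal_ne_top) hhint2 hHint2
  have hconst : ∫⁻ _ω, (ENNReal.ofReal A / ENNReal.ofReal (1 - A)) ∂μ
      = ENNReal.ofReal (A / (1 - A)) := by
    rw [lintegral_const, measure_univ, mul_one, ENNReal.ofReal_div_of_pos hA1']
  rw [hconst] at main
  exact main
end

section
/- Let ν be a Borel probability measure on [0,1] and let (X_i)_{i≥1} be i.i.d. random variables with law ν; write X̄_m = (X₁+⋯+X_m)/m and μ = ∫₀¹ x dν(x). If μ ≥ 1/2, then for every m ≥ 1 one has E[X̄_m/(1−X̄_m)] ≥ 1; thus the condensation criterion E[X̄_m/(1−X̄_m)] < 1 fails for every convolution power m, exhibiting the phase transition at mean 1/2. -/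
open MeasureTheory ProbabilityTheory Filter
open scoped ENNReal

/-- Tangent line trick at `a = 1/2`: for `a ∈ [0,1]`,
`4a - 1 ≤ a/(1-a)` (in `ℝ≥0∞`, with `1/0 = ∞`). -/
lemma tangent_line_key (a : ℝ) (h0 : 0 ≤ a) (h1 : a ≤ 1) :
    ENNReal.ofReal (4 * a - 1) ≤ ENNReal.ofReal a / ENNReal.ofReal (1 - a) := by
  rcases eq_or_lt_of_le h1 with h | h
  · have : ENNReal.ofReal a / ENNReal.ofReal (1 - a) = ⊤ := by
      subst h; simp
    simp [this]
  · rw [← ENNReal.ofReal_div_of_pos (by linarith)]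
    apply ENNReal.ofReal_le_ofReal
    rw [div_eq_mul_inv, ← sub_nonneg]
    have h1a : (0:ℝ) < 1 - a := by linarith
    have : a * (1-a)⁻¹ - (4*a - 1) = (2*a - 1)^2 * (1-a)⁻¹ := by
      field_simp; ring
    rw [this]
    positivity

/-- If the mean increment satisfies `μ_ε = ∫₀¹ x dν(x) ≥ 1/2`, then for every `m ≥ 1`
one has `E[X̄_m/(1-X̄_m)] ≥ 1`: the condensation criterion `E[X̄_m/(1-X̄_m)] < 1`
fails for every convolution power `m` (phase transition at mean `1/2`). -/
theorem no_condensation_of_mean_ge_half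
    {Ω : Type*} [MeasurableSpace Ω] (μ : Measure Ω) [IsProbabilityMeasure μ]
    (ν : Measure ℝ) [IsProbabilityMeasure ν]
    (X : ℕ → Ω → ℝ) (hmeas : ∀ i, Measurable (X i))
    (hindep : iIndepFun X μ)
    (hlaw : ∀ i, μ.map (X i) = ν)
    (hsupp : ν (Set.Icc (0:ℝ) 1)ᶜ = 0)
    (hmean : (1 : ℝ) / 2 ≤ ∫ x, x ∂ν) :
    ∀ m : ℕ, 1 ≤ m → 1 ≤ meanRatioInt μ X m := by
  intro m hm
  have hmpos : (0:ℝ) < m := by exact_mod_cast hm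
  -- each X i is a.e. in [0,1]
  have hae : ∀ i, ∀ᵐ ω ∂μ, X i ω ∈ Set.Icc (0:ℝ) 1 := by
    intro i
    have h0 : μ (X i ⁻¹' (Set.Icc (0:ℝ) 1)ᶜ) = 0 := by
      rw [← Measure.map_apply (hmeas i) measurableSet_Icc.compl, hlaw i, hsupp]
    rw [ae_iff]
    convert h0 using 2
    rfl
  have haeAll : ∀ᵐ ω ∂μ, ∀ i, X i ω ∈ Set.Icc (0:ℝ) 1 := ae_all_iff.2 hae
  set S : Ω → ℝ := fun ω => ∑ i ∈ Finset.range m, X i ω with hS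
  -- the sample mean is a.e. in [0,1]
  have haeMean : ∀ᵐ ω ∂μ, 0 ≤ S ω / m ∧ S ω / m ≤ 1 := by
    filter_upwards [haeAll] with ω hω
    have h1 : 0 ≤ S ω := Finset.sum_nonneg fun i _ => (hω i).1
    have h2 : S ω ≤ m := by
      calc S ω ≤ ∑ i ∈ Finset.range m, (1:ℝ) :=
            Finset.sum_le_sum fun i _ => (hω i).2
        _ = m := by simp
    constructor
    · positivity
    · rw [div_le_one hmpos]; exact h2
  -- integrability
  have hint_i : ∀ i, Integrable (X i) μ := by
    intro i
    refine (integrable_const (1:ℝ)).mono' (hmeas i).aestronglyMeasurable ?_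
    filter_upwards [hae i] with ω hω
    rw [Real.norm_eq_abs, abs_le]
    exact ⟨by linarith [hω.1], hω.2⟩
  have hS_int : Integrable S μ := integrable_finset_sum _ fun i _ => hint_i i
  set g : Ω → ℝ := fun ω => 4 * (S ω / m) - 1 with hg
  have hg_int : Integrable g μ := ((hS_int.div_const m).const_mul 4).sub (integrable_const 1)
  -- mean of each X i
  have hEXi : ∀ i, ∫ ω, X i ω ∂μ = ∫ x, x ∂ν := by
    intro i
    rw [← hlaw i]
    exact (integral_map (hmeas i).aemeasurable aestronglyMeasurable_id).symm
  have hES : ∫ ω, S ω ∂μ = m * ∫ x, x ∂ν := by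
    rw [hS, integral_finset_sum _ fun i _ => hint_i i]
    simp [hEXi]
  have hEg : ∫ ω, g ω ∂μ = 4 * (∫ x, x ∂ν) - 1 := by
    rw [hg]
    rw [integral_sub ((hS_int.div_const m).const_mul 4) (integrable_const 1)]
    rw [integral_const_mul, integral_div, hES]
    have : (m : ℝ) ≠ 0 := ne_of_gt hmpos
    field_simp
    simp
  have hEg1 : (1:ℝ) ≤ ∫ ω, g ω ∂μ := by rw [hEg]; linarith
  -- positive part
  set gp : Ω → ℝ := fun ω => max (g ω) 0 with hgp
  have hgp_int : Integrable gp μ := hg_int.pos_part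
  have hle1 : ∫ ω, g ω ∂μ ≤ ∫ ω, gp ω ∂μ :=
    integral_mono hg_int hgp_int fun ω => le_max_left _ _
  have hle2 : ENNReal.ofReal (∫ ω, gp ω ∂μ) ≤ ∫⁻ ω, ENNReal.ofReal (gp ω) ∂μ :=
    le_of_eq (ofReal_integral_eq_lintegral_ofReal hgp_int
      (Filter.Eventually.of_forall fun ω => le_max_right _ _))
  have hofReal_gp : ∀ ω, ENNReal.ofReal (gp ω) = ENNReal.ofReal (g ω) := by
    intro ω
    rcases le_total (g ω) 0 with h | h
    · simp [hgp, max_eq_right h, ENNReal.ofReal_eq_zero.2 h]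
    · simp [hgp, max_eq_left h]
  have hle3 : ∫⁻ ω, ENNReal.ofReal (g ω) ∂μ ≤ meanRatioInt μ X m := by
    unfold meanRatioInt
    refine lintegral_mono_ae ?_
    filter_upwards [haeMean] with ω hω
    exact tangent_line_key _ hω.1 hω.2
  calc (1:ℝ≥0∞) = ENNReal.ofReal 1 := by simp
    _ ≤ ENNReal.ofReal (∫ ω, g ω ∂μ) := ENNReal.ofReal_le_ofReal hEg1
    _ ≤ ENNReal.ofReal (∫ ω, gp ω ∂μ) := ENNReal.ofReal_le_ofReal hle1
    _ ≤ ∫⁻ ω, ENNReal.ofReal (gp ω) ∂μ := hle2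
    _ = ∫⁻ ω, ENNReal.ofReal (g ω) ∂μ := by simp_rw [hofReal_gp]
    _ ≤ meanRatioInt μ X m := hle3
end

section
/- Let X₁ and X₂ be i.i.d. random variables with values in [0,1]. If E[X₁/(1−X₁)] < 1, then E[(X₁+X₂)/(2−(X₁+X₂))] < 1; that is, if the condensation criterion holds for the fitness law ν, it also holds for its 2-fold convolution ν^{(2)} rescaled to mean average form. -/
open MeasureTheory ProbabilityTheory

lemma pointwise_convexity_bound {x y : ℝ} (hx : x ∈ Set.Icc (0:ℝ) 1)
    (hy : y ∈ Set.Icc (0:ℝ) 1) :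
    ENNReal.ofReal (x + y) / ENNReal.ofReal (2 - (x + y)) ≤
      (ENNReal.ofReal x / ENNReal.ofReal (1 - x) +
       ENNReal.ofReal y / ENNReal.ofReal (1 - y)) / 2 := by
  obtain ⟨hx0, hx1⟩ := hx
  obtain ⟨hy0, hy1⟩ := hy
  rcases eq_or_lt_of_le hx1 with h1 | h1
  · subst h1
    have : ENNReal.ofReal 1 / ENNReal.ofReal (1 - 1) = ⊤ := by
      norm_num
    rw [this]
    simp [ENNReal.top_div, ENNReal.add_eq_top]
  rcases eq_or_lt_of_le hy1 with h2 | h2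
  · subst h2
    have : ENNReal.ofReal 1 / ENNReal.ofReal (1 - 1) = ⊤ := by
      norm_num
    rw [this]
    simp [ENNReal.top_div, ENNReal.add_eq_top]
  have ha : (0:ℝ) < 1 - x := by linarith
  have hb : (0:ℝ) < 1 - y := by linarith
  have hc : (0:ℝ) < 2 - (x + y) := by linarith
  rw [← ENNReal.ofReal_div_of_pos hc, ← ENNReal.ofReal_div_of_pos ha,
    ← ENNReal.ofReal_div_of_pos hb, ← ENNReal.ofReal_add (by positivity) (by positivity)]
  have h2' : (2:ENNReal) = ENNReal.ofReal 2 := by norm_num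
  rw [h2', ← ENNReal.ofReal_div_of_pos (by norm_num)]
  apply ENNReal.ofReal_le_ofReal
  rw [div_add_div _ _ ha.ne' hb.ne', div_div,
    div_le_div_iff₀ hc (by positivity)]
  nlinarith [sq_nonneg (x - y)]

/-- Let `X₁, X₂` be i.i.d. random variables with values in `[0,1]`.
If `E[X₁/(1-X₁)] < 1` (condensation criterion for the fitness law `ν`), then
`E[(X₁+X₂)/(2-(X₁+X₂))] < 1` (condensation criterion for the 2-fold convolution
`ν^{(2)}`); expectations are taken in `[0,∞]` with `x/(1-x) = ∞` when `x = 1`. -/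
theorem condensation_two_fold_convolution
    {Ω : Type*} [MeasurableSpace Ω] (μ : Measure Ω) [IsProbabilityMeasure μ]
    (X₁ X₂ : Ω → ℝ) (h₁ : Measurable X₁) (h₂ : Measurable X₂)
    (hind : IndepFun X₁ X₂ μ) (hid : IdentDistrib X₁ X₂ μ μ)
    (hr₁ : ∀ ω, X₁ ω ∈ Set.Icc (0:ℝ) 1) (hr₂ : ∀ ω, X₂ ω ∈ Set.Icc (0:ℝ) 1)
    (hcond : ∫⁻ ω, ENNReal.ofReal (X₁ ω) / ENNReal.ofReal (1 - X₁ ω) ∂μ < 1) :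
    ∫⁻ ω, ENNReal.ofReal (X₁ ω + X₂ ω) /
      ENNReal.ofReal (2 - (X₁ ω + X₂ ω)) ∂μ < 1 := by
  set f : Ω → ENNReal := fun ω => ENNReal.ofReal (X₁ ω) / ENNReal.ofReal (1 - X₁ ω)
  set g : Ω → ENNReal := fun ω => ENNReal.ofReal (X₂ ω) / ENNReal.ofReal (1 - X₂ ω)
  have hfm : Measurable f :=
    h₁.ennreal_ofReal.div (measurable_const.sub h₁).ennreal_ofReal
  have hgm : Measurable g :=
    h₂.ennreal_ofReal.div (measurable_const.sub h₂).ennreal_ofReal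
  have hgeq : ∫⁻ ω, g ω ∂μ = ∫⁻ ω, f ω ∂μ := by
    have hF : Measurable (fun x : ℝ => ENNReal.ofReal x / ENNReal.ofReal (1 - x)) := by
      exact measurable_id.ennreal_ofReal.div
        (measurable_const.sub measurable_id).ennreal_ofReal
    calc ∫⁻ ω, g ω ∂μ
        = ∫⁻ x, ENNReal.ofReal x / ENNReal.ofReal (1 - x) ∂(μ.map X₂) := by
          rw [lintegral_map hF h₂]
      _ = ∫⁻ x, ENNReal.ofReal x / ENNReal.ofReal (1 - x) ∂(μ.map X₁) := by
          rw [hid.map_eq]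
      _ = ∫⁻ ω, f ω ∂μ := by rw [lintegral_map hF h₁]
  have hmono : ∫⁻ ω, ENNReal.ofReal (X₁ ω + X₂ ω) /
      ENNReal.ofReal (2 - (X₁ ω + X₂ ω)) ∂μ ≤ ∫⁻ ω, (f ω + g ω) / 2 ∂μ :=
    lintegral_mono fun ω => pointwise_convexity_bound (hr₁ ω) (hr₂ ω)
  have hcalc : ∫⁻ ω, (f ω + g ω) / 2 ∂μ = ∫⁻ ω, f ω ∂μ := by
    simp only [div_eq_mul_inv]
    rw [lintegral_mul_const (f := fun ω => f ω + g ω) _ (hfm.add hgm), lintegral_add_left hfm, hgeq,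
      ← two_mul, mul_comm, ← mul_assoc,
      ENNReal.inv_mul_cancel (by norm_num) (by norm_num), one_mul]
  calc ∫⁻ ω, ENNReal.ofReal (X₁ ω + X₂ ω) /
      ENNReal.ofReal (2 - (X₁ ω + X₂ ω)) ∂μ ≤ ∫⁻ ω, f ω ∂μ := hcalc ▸ hmono
    _ < 1 := hcond
end
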